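/- Let A ⊆ {0,1,2}^n and let A' be obtained from A by successively applying the monotonization steps in coordinates 1 through n. Then |A' \ A| ≤ |∂A|, where ∂A is the upper edge border of the original set A. -/

import Mathlib

open Finset

abbrev Cube (n : ℕ) := Fin n → Fin 3

/-- The full upper edge border `∂A = ⋃ i, ∂ᵢ A`, encoded as triples `(i, v, t)` representing
the edge from `v` to `Function.update v i t` with `v i < t`, tail in `A`, head not in `A`. -/
def totalBorder (n : ℕ) (A : Finset (Cube n)) : Finset (Fin n × Cube n × Fin 3) :=
  univ.filter (fun q => q.2.1 ∈ A ∧ Function.update q.2.1 q.1 q.2.2 ∉ A ∧ q.2.1 q.1 < q.2.2)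

/-- The shifting operation in coordinate `i` toward value `t`. -/
def shiftTo (n : ℕ) (i : Fin n) (t : Fin 3) (A : Finset (Cube n)) : Finset (Cube n) :=
  (A.filter (fun v => ¬(v i < t ∧ Function.update v i t ∉ A))) ∪
  ((A.filter (fun v => v i < t ∧ Function.update v i t ∉ A)).image
    (fun v => Function.update v i t))

/-- The `i`-th monotonization step. -/
def monStep (n : ℕ) (i : Fin n) (A : Finset (Cube n)) : Finset (Cube n) :=
  shiftTo n i 1 (shiftTo n i 2 A)

/-- Successive monotonization in coordinates `1, …, n`. -/
def monAll (n : ℕ) (A : Finset (Cube n)) : Finset (Cube n) :=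
  (List.finRange n).foldl (fun S i => monStep n i S) A

/-- the point map realizing one `shiftTo`. -/
def stepFun (n : ℕ) (i : Fin n) (t : Fin 3) (A : Finset (Cube n)) (v : Cube n) : Cube n :=
  if v i < t ∧ Function.update v i t ∉ A then Function.update v i t else v

lemma shiftTo_eq_image (n : ℕ) (i : Fin n) (t : Fin 3) (A : Finset (Cube n)) :
    shiftTo n i t A = A.image (stepFun n i t A) := by
  ext x
  simp only [shiftTo, stepFun, Finset.mem_union, Finset.mem_filter, Finset.mem_image]
  constructor
  · rintro (⟨hx, hnot⟩ | ⟨v, ⟨hv, hc⟩, hvx⟩)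
    · exact ⟨x, hx, if_neg hnot⟩
    · exact ⟨v, hv, by rw [if_pos hc]; exact hvx⟩
  · rintro ⟨v, hv, hvx⟩
    by_cases hc : v i < t ∧ Function.update v i t ∉ A
    · right; exact ⟨v, ⟨hv, hc⟩, by rw [if_pos hc] at hvx; exact hvx⟩
    · left; rw [if_neg hc] at hvx; subst hvx; exact ⟨hv, hc⟩

/-- the point map realizing one `monStep`. -/
def msFun (n : ℕ) (i : Fin n) (B : Finset (Cube n)) (v : Cube n) : Cube n :=
  stepFun n i 1 (shiftTo n i 2 B) (stepFun n i 2 B v)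

lemma monStep_eq_image (n : ℕ) (i : Fin n) (B : Finset (Cube n)) :
    monStep n i B = B.image (msFun n i B) := by
  rw [monStep, shiftTo_eq_image n i 1 (shiftTo n i 2 B)]
  nth_rewrite 2 [shiftTo_eq_image n i 2 B]
  rw [Finset.image_image]
  rfl

lemma msFun_spec (n : ℕ) (i : Fin n) (B : Finset (Cube n)) (v : Cube n) :
    msFun n i B v = v ∨ ∃ t : Fin 3, v i < t ∧ msFun n i B v = Function.update v i t := by
  unfold msFun stepFun
  split_ifs with h1 h2 h2
  · exfalso
    have h3 : (Function.update v i 2) i = (2 : Fin 3) := by simp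
    rw [h3] at h2
    exact absurd h2.1 (by decide)
  · exact Or.inr ⟨2, h1.1, rfl⟩
  · exact Or.inr ⟨1, h2.1, rfl⟩
  · exact Or.inl rfl

lemma key (n : ℕ) (A B : Finset (Cube n)) (i : Fin n) :
    (monStep n i B \ A).card ≤ (B \ A).card +
      ((totalBorder n A).filter (fun q => q.1 = i)).card := by
  classical
  have hsub : monStep n i B \ A ⊆
      ((B \ A).image (msFun n i B)) ∪
      ((B.filter (fun v => v ∈ A ∧ msFun n i B v ∉ A)).image (msFun n i B)) := by
    intro x hx
    rw [Finset.mem_sdiff, monStep_eq_image] at hx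
    obtain ⟨hx1, hxA⟩ := hx
    obtain ⟨v, hvB, hvx⟩ := Finset.mem_image.mp hx1
    by_cases hvA : v ∈ A
    · refine Finset.mem_union_right _ (Finset.mem_image.mpr
        ⟨v, Finset.mem_filter.mpr ⟨hvB, hvA, ?_⟩, hvx⟩)
      rw [hvx]; exact hxA
    · exact Finset.mem_union_left _ (Finset.mem_image.mpr
        ⟨v, Finset.mem_sdiff.mpr ⟨hvB, hvA⟩, hvx⟩)
  refine le_trans (Finset.card_le_card hsub) (le_trans (Finset.card_union_le _ _) ?_)
  refine Nat.add_le_add (Finset.card_image_le) (le_trans Finset.card_image_le ?_)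
  refine Finset.card_le_card_of_injOn (fun v => (i, v, msFun n i B v i)) ?_ ?_
  · intro v hv
    simp only [Finset.mem_coe, Finset.mem_filter] at hv
    obtain ⟨hvB, hvA, hfv⟩ := hv
    have hmove : ∃ t : Fin 3, v i < t ∧ msFun n i B v = Function.update v i t := by
      rcases msFun_spec n i B v with h | h
      · exact absurd (show msFun n i B v ∈ A by rw [h]; exact hvA) hfv
      · exact h
    obtain ⟨t, hlt, heq⟩ := hmove
    have hti : msFun n i B v i = t := by rw [heq]; simp
    rw [Finset.mem_coe, Finset.mem_filter]
    refine ⟨?_, rfl⟩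
    rw [totalBorder, Finset.mem_filter]
    refine ⟨Finset.mem_univ _, hvA, ?_, ?_⟩
    · show Function.update v i (msFun n i B v i) ∉ A
      rw [hti, ← heq]; exact hfv
    · show v i < msFun n i B v i
      rw [hti]; exact hlt
  · intro v _ w _ h
    exact congrArg (fun q => q.2.1) h

lemma aux (n : ℕ) (A : Finset (Cube n)) :
    ∀ (l : List (Fin n)) (B : Finset (Cube n)),
      ((l.foldl (fun S i => monStep n i S) B) \ A).card ≤ (B \ A).card +
        (l.map (fun i => ((totalBorder n A).filter (fun q => q.1 = i)).card)).sum := by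
  intro l
  induction l with
  | nil => intro B; simp
  | cons i l ih =>
    intro B
    simp only [List.foldl_cons, List.map_cons, List.sum_cons]
    have h1 := ih (monStep n i B)
    have h2 := key n A B i
    omega

theorem stmt4 (n : ℕ) (A : Finset (Cube n)) :
    ((monAll n A) \ A).card ≤ (totalBorder n A).card := by
  classical
  have h := aux n A (List.finRange n) A
  simp only [Finset.sdiff_self, Finset.card_empty, zero_add] at h
  refine le_trans h (le_of_eq ?_)
  have hfib : (totalBorder n A).card =
      ∑ i : Fin n, ((totalBorder n A).filter (fun q => q.1 = i)).card :=
    Finset.card_eq_sum_card_fiberwise (fun x _ => Finset.mem_univ x.1)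
  rw [← List.sum_toFinset _ (List.nodup_finRange n), List.toFinset_finRange, ← hfib]
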